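/- Let φ ∈ ℝ[μ₁,μ₂,μ₃] be a polynomial of degree exactly 3 satisfying the toric nearly Kähler equation, and let φ³ denote its degree-3 homogeneous component. Then det Hess φ³ = (2/3)·φ³ holds as an identity of polynomials. -/
import Mathlib


open MvPolynomial
open Finsupp

set_option maxHeartbeats 1000000

abbrev P3 := MvPolynomial (Fin 3) ℝ

lemma degFin (d : Fin 3 →₀ ℕ) : d.degree = ∑ i : Fin 3, d i := by
  rw [Finsupp.degree]
  exact Finset.sum_subset (Finset.subset_univ _)
    (fun i _ h => Finsupp.notMem_support_iff.mp h)

lemma degree_add' (a b : Fin 3 →₀ ℕ) : (a + b).degree = a.degree + b.degree := by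
  simp [degFin, Finset.sum_add_distrib]

lemma degree_single_one (i : Fin 3) : (Finsupp.single i 1).degree = 1 := by
  simp [degFin, Finsupp.single_apply]

lemma sum_eq_degree (d : Fin 3 →₀ ℕ) : (d.sum fun _ e => e) = d.degree := rfl
lemma sum_id_eq_degree (d : Fin 3 →₀ ℕ) : (d.sum fun _ => id) = d.degree := rfl

lemma pderiv_totalDegree_le {p : P3} {n : ℕ} (i : Fin 3)
    (h : p.totalDegree ≤ n + 1) : (pderiv i p).totalDegree ≤ n := by
  conv_lhs => rw [p.as_sum]
  rw [map_sum]
  refine totalDegree_finsetSum_le fun v hv => ?_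
  rw [pderiv_monomial]
  by_cases hvi : v i = 0
  · simp [hvi]
  · refine (totalDegree_monomial_le _ _).trans ?_
    rw [sum_id_eq_degree]
    have hle : Finsupp.single i 1 ≤ v :=
      Finsupp.single_le_iff.mpr (Nat.one_le_iff_ne_zero.mpr hvi)
    have hadd : (v - Finsupp.single i 1) + Finsupp.single i 1 = v :=
      tsub_add_cancel_of_le hle
    have hdv : (v - Finsupp.single i 1).degree + 1 = v.degree := by
      conv_rhs => rw [← hadd]
      rw [degree_add', degree_single_one]
    have hvd : v.degree ≤ n + 1 := by
      rw [← sum_eq_degree]; exact (le_totalDegree hv).trans h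
    omega

lemma pderiv_isHomogeneous {p : P3} {n : ℕ} (i : Fin 3)
    (h : p.IsHomogeneous (n + 1)) : (pderiv i p).IsHomogeneous n := by
  conv_lhs => rw [p.as_sum]
  rw [map_sum]
  refine IsHomogeneous.sum _ _ _ fun v hv => ?_
  rw [pderiv_monomial]
  by_cases hvi : v i = 0
  · simp only [hvi, Nat.cast_zero, mul_zero, monomial_zero]
    exact isHomogeneous_zero _ _ _
  · refine isHomogeneous_monomial _ ?_
    have hle : Finsupp.single i 1 ≤ v :=
      Finsupp.single_le_iff.mpr (Nat.one_le_iff_ne_zero.mpr hvi)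
    have hadd : (v - Finsupp.single i 1) + Finsupp.single i 1 = v :=
      tsub_add_cancel_of_le hle
    have hvd : v.degree = n + 1 := by
      by_contra hne
      exact (MvPolynomial.mem_support_iff.mp hv) (h.coeff_eq_zero hne)
    have := degree_add' (v - Finsupp.single i 1) (Finsupp.single i 1)
    rw [hadd, degree_single_one, hvd] at this
    omega

/-- The determinant of the Hessian matrix of second partial derivatives of a
polynomial in three variables. -/
noncomputable def hessDet (φ : MvPolynomial (Fin 3) ℝ) : MvPolynomial (Fin 3) ℝ :=
  (Matrix.of fun i j : Fin 3 => pderiv i (pderiv j φ)).det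

/-- The Euler operator `∂_r φ = μ₁ ∂φ/∂μ₁ + μ₂ ∂φ/∂μ₂ + μ₃ ∂φ/∂μ₃`. -/
noncomputable def eulerOp (φ : MvPolynomial (Fin 3) ℝ) : MvPolynomial (Fin 3) ℝ :=
  ∑ i : Fin 3, X i * pderiv i φ

lemma eulerOp_monomial (s : Fin 3 →₀ ℕ) (a : ℝ) :
    eulerOp (monomial s a) = monomial s (a * s.degree) := by
  unfold eulerOp
  have h : ∀ i : Fin 3, X i * pderiv i (monomial s a) = monomial s (a * s i) := by
    intro i
    rw [pderiv_monomial]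
    by_cases hvi : s i = 0
    · simp [hvi]
    · have hle : Finsupp.single i 1 ≤ s :=
        Finsupp.single_le_iff.mpr (Nat.one_le_iff_ne_zero.mpr hvi)
      rw [X, monomial_mul, one_mul, add_comm, tsub_add_cancel_of_le hle]
  simp_rw [h]
  rw [← map_sum]
  congr 1
  rw [degFin]
  push_cast
  rw [Finset.mul_sum]

lemma eulerOp_sum {ι : Type*} (s : Finset ι) (f : ι → P3) :
    eulerOp (∑ x ∈ s, f x) = ∑ x ∈ s, eulerOp (f x) := by
  unfold eulerOp
  simp_rw [map_sum, Finset.mul_sum]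
  rw [Finset.sum_comm]

lemma hc_monomial (n : ℕ) (s : Fin 3 →₀ ℕ) (a : ℝ) :
    homogeneousComponent n (monomial s a) = if n = s.degree then monomial s a else 0 :=
  homogeneousComponent_of_mem
    ((mem_homogeneousSubmodule _ _).mpr (isHomogeneous_monomial a rfl))

lemma hc_eulerOp (p : P3) (n : ℕ) :
    homogeneousComponent n (eulerOp p) = C (n : ℝ) * homogeneousComponent n p := by
  rw [p.as_sum, eulerOp_sum, map_sum, map_sum, Finset.mul_sum]
  refine Finset.sum_congr rfl fun v hv => ?_
  rw [eulerOp_monomial, hc_monomial, hc_monomial]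
  by_cases h : n = v.degree
  · rw [if_pos h, if_pos h, C_mul_monomial]
    congr 1
    rw [h]; ring
  · simp [h]

lemma dmul {p q : P3} {m n : ℕ} (hp : p.totalDegree ≤ m) (hq : q.totalDegree ≤ n) :
    (p * q).totalDegree ≤ m + n :=
  (totalDegree_mul p q).trans (add_le_add hp hq)

lemma dadd {p q : P3} {n : ℕ} (hp : p.totalDegree ≤ n) (hq : q.totalDegree ≤ n) :
    (p + q).totalDegree ≤ n :=
  (totalDegree_add p q).trans (max_le hp hq)

lemma dsub {p q : P3} {n : ℕ} (hp : p.totalDegree ≤ n) (hq : q.totalDegree ≤ n) :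
    (p - q).totalDegree ≤ n := by
  rw [sub_eq_add_neg]
  exact dadd hp (le_trans (le_of_eq (totalDegree_neg q)) hq)

lemma tri {a0 a1 a2 b0 b1 b2 : P3}
    (h0 : a0.totalDegree ≤ 1) (h1 : a1.totalDegree ≤ 1) (h2 : a2.totalDegree ≤ 1)
    (g0 : b0.totalDegree ≤ 0) (g1 : b1.totalDegree ≤ 0) (g2 : b2.totalDegree ≤ 0) :
    ((a0 + b0) * (a1 + b1) * (a2 + b2) - a0 * a1 * a2).totalDegree ≤ 2 := by
  have key : (a0 + b0) * (a1 + b1) * (a2 + b2) - a0 * a1 * a2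
      = b0 * ((a1 + b1) * (a2 + b2)) + a0 * (b1 * (a2 + b2)) + a0 * (a1 * b2) := by ring
  rw [key]
  have e1 : b1.totalDegree ≤ 1 := g1.trans (by norm_num)
  have e2 : b2.totalDegree ≤ 1 := g2.trans (by norm_num)
  have t1 : (b0 * ((a1 + b1) * (a2 + b2))).totalDegree ≤ 2 :=
    dmul g0 (dmul (dadd h1 e1) (dadd h2 e2))
  have t2 : (a0 * (b1 * (a2 + b2))).totalDegree ≤ 2 :=
    dmul h0 (dmul g1 (dadd h2 e2))
  have t3 : (a0 * (a1 * b2)).totalDegree ≤ 2 := dmul h0 (dmul h1 g2)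
  exact dadd (dadd t1 t2) t3

lemma det_diff_deg (A B : Matrix (Fin 3) (Fin 3) P3)
    (hA : ∀ i j, (A i j).totalDegree ≤ 1) (hB : ∀ i j, (B i j).totalDegree ≤ 0) :
    ((A + B).det - A.det).totalDegree ≤ 2 := by
  have key : (A + B).det - A.det =
      ((A 0 0 + B 0 0) * (A 1 1 + B 1 1) * (A 2 2 + B 2 2) - A 0 0 * A 1 1 * A 2 2)
      - ((A 0 0 + B 0 0) * (A 1 2 + B 1 2) * (A 2 1 + B 2 1) - A 0 0 * A 1 2 * A 2 1)
      - ((A 0 1 + B 0 1) * (A 1 0 + B 1 0) * (A 2 2 + B 2 2) - A 0 1 * A 1 0 * A 2 2)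
      + ((A 0 1 + B 0 1) * (A 1 2 + B 1 2) * (A 2 0 + B 2 0) - A 0 1 * A 1 2 * A 2 0)
      + ((A 0 2 + B 0 2) * (A 1 0 + B 1 0) * (A 2 1 + B 2 1) - A 0 2 * A 1 0 * A 2 1)
      - ((A 0 2 + B 0 2) * (A 1 1 + B 1 1) * (A 2 0 + B 2 0) - A 0 2 * A 1 1 * A 2 0) := by
    rw [Matrix.det_fin_three, Matrix.det_fin_three]
    simp only [Matrix.add_apply]
    ring
  rw [key]
  exact dsub (dadd (dadd (dsub (dsub
    (tri (hA 0 0) (hA 1 1) (hA 2 2) (hB 0 0) (hB 1 1) (hB 2 2))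
    (tri (hA 0 0) (hA 1 2) (hA 2 1) (hB 0 0) (hB 1 2) (hB 2 1)))
    (tri (hA 0 1) (hA 1 0) (hA 2 2) (hB 0 1) (hB 1 0) (hB 2 2)))
    (tri (hA 0 1) (hA 1 2) (hA 2 0) (hB 0 1) (hB 1 2) (hB 2 0)))
    (tri (hA 0 2) (hA 1 0) (hA 2 1) (hB 0 2) (hB 1 0) (hB 2 1)))
    (tri (hA 0 2) (hA 1 1) (hA 2 0) (hB 0 2) (hB 1 1) (hB 2 0))

/-- The toric nearly Kähler equation `det Hess φ = (8/3)φ − (11/3)∂_r φ + ∂_r² φ`. -/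
def IsTNKSolution (φ : MvPolynomial (Fin 3) ℝ) : Prop :=
  hessDet φ = C (8/3) * φ - C (11/3) * eulerOp φ + eulerOp (eulerOp φ)

/-- If `φ` has degree exactly `3` and satisfies the toric nearly Kähler equation, then the
degree-3 homogeneous component `φ³` satisfies `det Hess φ³ = (2/3) φ³`. -/
theorem hessDet_cubic_component (φ : MvPolynomial (Fin 3) ℝ)
    (hdeg : φ.totalDegree = 3) (hTNK : IsTNKSolution φ) :
    hessDet (homogeneousComponent 3 φ) = C (2/3) * homogeneousComponent 3 φ := by
  set ψ := homogeneousComponent 3 φ with hψdef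
  have hψ3 : ψ.IsHomogeneous 3 := homogeneousComponent_isHomogeneous 3 φ
  set ρ := φ - ψ with hρdef
  -- ρ has total degree ≤ 2
  have hρdeg : ρ.totalDegree ≤ 2 := by
    rw [totalDegree]
    refine Finset.sup_le fun d hd => ?_
    rw [MvPolynomial.mem_support_iff] at hd
    have hcd : coeff d ρ = coeff d φ - (if d.degree = 3 then coeff d φ else 0) := by
      rw [hρdef, coeff_sub, hψdef, coeff_homogeneousComponent]
    show (d.sum fun _ e => e) ≤ 2
    rw [sum_eq_degree]
    by_cases h3 : d.degree = 3
    · rw [hcd, if_pos h3, sub_self] at hd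
      exact absurd rfl hd
    · have hne : coeff d φ ≠ 0 := by rwa [hcd, if_neg h3, sub_zero] at hd
      have hled := le_totalDegree (MvPolynomial.mem_support_iff.mpr hne)
      rw [sum_eq_degree, hdeg] at hled
      omega
  -- Hessian matrices
  set A : Matrix (Fin 3) (Fin 3) P3 := Matrix.of fun i j => pderiv i (pderiv j ψ) with hAdef
  set B : Matrix (Fin 3) (Fin 3) P3 := Matrix.of fun i j => pderiv i (pderiv j ρ) with hBdef
  have hφψρ : φ = ψ + ρ := by rw [hρdef]; ring
  have hsplit : (Matrix.of fun i j : Fin 3 => pderiv i (pderiv j φ)) = A + B := by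
    ext i j
    simp only [Matrix.add_apply, hAdef, hBdef, Matrix.of_apply]
    rw [hφψρ]
    simp [map_add]
  have hA1 : ∀ i j, (A i j).IsHomogeneous 1 := fun i j =>
    pderiv_isHomogeneous i (pderiv_isHomogeneous j (show ψ.IsHomogeneous (1+1+1) from hψ3))
  have hAdeg : ∀ i j, (A i j).totalDegree ≤ 1 := fun i j => (hA1 i j).totalDegree_le
  have hBdeg : ∀ i j, (B i j).totalDegree ≤ 0 := fun i j =>
    pderiv_totalDegree_le i (pderiv_totalDegree_le j
      (show ρ.totalDegree ≤ 1 + 1 from hρdeg))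
  -- hessDet ψ is homogeneous of degree 3
  have hdet3 : (hessDet ψ).IsHomogeneous 3 := by
    have h3 : ∀ {a b c : P3}, a.IsHomogeneous 1 → b.IsHomogeneous 1 → c.IsHomogeneous 1 →
        (a * b * c).IsHomogeneous 3 := fun ha hb hc => (ha.mul hb).mul hc
    rw [hessDet, ← hAdef, Matrix.det_fin_three]
    exact (((((h3 (hA1 0 0) (hA1 1 1) (hA1 2 2)).sub
      (h3 (hA1 0 0) (hA1 1 2) (hA1 2 1))).sub
      (h3 (hA1 0 1) (hA1 1 0) (hA1 2 2))).add
      (h3 (hA1 0 1) (hA1 1 2) (hA1 2 0))).add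
      (h3 (hA1 0 2) (hA1 1 0) (hA1 2 1))).sub
      (h3 (hA1 0 2) (hA1 1 1) (hA1 2 0))
  -- apply homogeneousComponent 3 to both sides of the TNK equation
  have happ := congrArg (homogeneousComponent 3) hTNK
  have hLHS : homogeneousComponent 3 (hessDet φ) = hessDet ψ := by
    have hdiff : hessDet φ - hessDet ψ = (A + B).det - A.det := by
      rw [hessDet, hessDet, hsplit, ← hAdef]
    have hlt : (hessDet φ - hessDet ψ).totalDegree < 3 := by
      rw [hdiff]
      exact Nat.lt_succ_of_le ((det_diff_deg A B hAdeg hBdeg).trans (by norm_num))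
    have hzero : homogeneousComponent 3 (hessDet φ - hessDet ψ) = 0 :=
      homogeneousComponent_eq_zero _ _ hlt
    have hself : homogeneousComponent 3 (hessDet ψ) = hessDet ψ := by
      rw [homogeneousComponent_of_mem ((mem_homogeneousSubmodule _ _).mpr hdet3), if_pos rfl]
    calc homogeneousComponent 3 (hessDet φ)
        = homogeneousComponent 3 (hessDet ψ + (hessDet φ - hessDet ψ)) := by ring_nf
      _ = hessDet ψ := by rw [map_add, hzero, hself, add_zero]
  rw [hLHS] at happ
  rw [map_add, map_sub, homogeneousComponent_C_mul, homogeneousComponent_C_mul,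
    hc_eulerOp, hc_eulerOp, hc_eulerOp, ← hψdef] at happ
  push_cast at happ
  rw [happ]
  have e1 : (C (11/3) : P3) * (C 3 * ψ) = C 11 * ψ := by rw [← mul_assoc, ← C_mul]; norm_num
  have e2 : (C 3 : P3) * (C 3 * ψ) = C 9 * ψ := by rw [← mul_assoc, ← C_mul]; norm_num
  rw [e1, e2, ← sub_mul, ← add_mul, ← C_sub, ← C_add]
  norm_num
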